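/- In a standard gambling game where the gambling house Γ of Player 1 is weakly acyclic (and Λ is leavable), every balanced continuous function v: X×Y → ℝ is excessive and depressive. -/

import Mathlib

open MeasureTheory Set Filter Topology

noncomputable section
namespace GG

abbrev PM (S : Type*) [MeasurableSpace S] := MeasureTheory.ProbabilityMeasure S

variable {S : Type*} [MeasurableSpace S]

/-- Dirac probability measure. -/
def dirac (s : S) : PM S := ⟨MeasureTheory.Measure.dirac s, inferInstance⟩

/-- Integral of a function against a probability measure (the affine extension `f̃`). -/
def iPM (f : S → ℝ) (p : PM S) : ℝ := ∫ s, f s ∂(p : MeasureTheory.Measure S)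

/-- `r` is the mixture `t p + (1-t) q`. -/
def IsMix (t : NNReal) (p q r : PM S) : Prop :=
  (r : MeasureTheory.Measure S)
    = (t : ENNReal) • (p : MeasureTheory.Measure S)
      + ((1 : ENNReal) - (t : ENNReal)) • (q : MeasureTheory.Measure S)

/-- Convexity of a set of probability measures. -/
def PMConvex (A : Set (PM S)) : Prop :=
  ∀ p ∈ A, ∀ q ∈ A, ∀ t : NNReal, t ≤ 1 → ∀ r : PM S, IsMix t p q r → r ∈ A

/-- Convexity of a set of pairs of probability measures. -/
def PMConvex2 (A : Set (PM S × PM S)) : Prop :=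
  ∀ a ∈ A, ∀ b ∈ A, ∀ t : NNReal, t ≤ 1 → ∀ c : PM S × PM S,
    IsMix t a.1 b.1 c.1 → IsMix t a.2 b.2 c.2 → c ∈ A

/-- Convex hull of a set of probability measures. -/
def convexHullPM (A : Set (PM S)) : Set (PM S) := ⋂₀ {T | A ⊆ T ∧ PMConvex T}

/-- Convex hull of a set of pairs of probability measures. -/
def convexHull2 (A : Set (PM S × PM S)) : Set (PM S × PM S) := ⋂₀ {T | A ⊆ T ∧ PMConvex2 T}

/-- Kantorovich–Rubinstein distance. -/
def dKR {S : Type*} [MeasurableSpace S] [PseudoMetricSpace S] (p q : PM S) : ℝ :=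
  sSup {r | ∃ f : S → ℝ, LipschitzWith 1 f ∧ r = |iPM f p - iPM f q|}

def argmaxOn {α : Type*} (f : α → ℝ) (A : Set α) : Set α := {p ∈ A | ∀ q ∈ A, f q ≤ f p}

def argminOn {α : Type*} (f : α → ℝ) (A : Set α) : Set α := {p ∈ A | ∀ q ∈ A, f p ≤ f q}

section Topo

variable [TopologicalSpace S] [OpensMeasurableSpace S]

/-- Graph of the linear extension `Γ̃`: the closed convex hull of the graph of `Γ`. -/
def tGraph (Γ : S → Set (PM S)) : Set (PM S × PM S) :=
  closure (convexHull2 {z | ∃ x : S, z.1 = dirac x ∧ z.2 ∈ Γ x})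

/-- The linear extension `Γ̃ : Δ(S) ⇉ Δ(S)`. -/
def tStep (Γ : S → Set (PM S)) (p : PM S) : Set (PM S) := {q | (p, q) ∈ tGraph Γ}

/-- Iterates `Γ̃ⁿ`, with `Γ̃⁰(p) = {p}` and `Γ̃^{n+1} = Γ̃ⁿ ∘ Γ̃`. -/
def tIter (Γ : S → Set (PM S)) : ℕ → PM S → Set (PM S)
  | 0, p => {p}
  | n + 1, p => {r | ∃ q ∈ tStep Γ p, r ∈ tIter Γ n q}

/-- The reachable set `Γ^∞(x)`: closure of `⋃ₙ Γ̃ⁿ(δ_x)`. -/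
def reach (Γ : S → Set (PM S)) (x : S) : Set (PM S) :=
  closure (⋃ n : ℕ, tIter Γ n (dirac x))

/-- There is a bounded measurable lower semicontinuous `φ` whose (expectation) argmax over
`R x` is exactly `{δ_x}`, for every `x`. -/
def AcyclicFor (R : S → Set (PM S)) : Prop :=
  ∃ φ : S → ℝ, Measurable φ ∧ (∃ C : ℝ, ∀ s, |φ s| ≤ C) ∧ LowerSemicontinuous φ ∧
    ∀ x : S, argmaxOn (iPM φ) (R x) = {dirac x}

/-- There is a bounded measurable upper semicontinuous `ψ` whose (expectation) argmin over
`R y` is exactly `{δ_y}`, for every `y`. -/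
def AcyclicForMin (R : S → Set (PM S)) : Prop :=
  ∃ ψ : S → ℝ, Measurable ψ ∧ (∃ C : ℝ, ∀ s, |ψ s| ≤ C) ∧ UpperSemicontinuous ψ ∧
    ∀ y : S, argminOn (iPM ψ) (R y) = {dirac y}

end Topo

section TwoPlayers

variable {X Y : Type*} [MeasurableSpace X] [MeasurableSpace Y]

/-- The bi-affine extension `ṽ(p,q) = ∫∫ v dp dq`. -/
def iXY (v : X × Y → ℝ) (p : PM X) (q : PM Y) : ℝ :=
  ∫ x, ∫ y, v (x, y) ∂(q : MeasureTheory.Measure Y) ∂(p : MeasureTheory.Measure X)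

/-- `v` is excessive: `v(x,y) = max_{p ∈ Γ(x)} ṽ(p,y)`. -/
def Excessive (Γ : X → Set (PM X)) (v : X × Y → ℝ) : Prop :=
  ∀ x : X, ∀ y : Y, IsGreatest ((fun p => iXY v p (dirac y)) '' Γ x) (v (x, y))

/-- `v` is depressive: `v(x,y) = min_{q ∈ Λ(y)} ṽ(x,q)`. -/
def Depressive (Λ : Y → Set (PM Y)) (v : X × Y → ℝ) : Prop :=
  ∀ x : X, ∀ y : Y, IsLeast ((fun q => iXY v (dirac x) q) '' Λ y) (v (x, y))

/-- `v` is balanced: `v(x,y) = max_{p ∈ Γ(x)} min_{q ∈ Λ(y)} ṽ(p,q)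
    = min_{q ∈ Λ(y)} max_{p ∈ Γ(x)} ṽ(p,q)`. -/
def Balanced (Γ : X → Set (PM X)) (Λ : Y → Set (PM Y)) (v : X × Y → ℝ) : Prop :=
  ∀ x : X, ∀ y : Y,
    IsGreatest {r | ∃ p ∈ Γ x, IsLeast (iXY v p '' Λ y) r} (v (x, y)) ∧
    IsLeast {r | ∃ q ∈ Λ y, IsGreatest ((fun p => iXY v p q) '' Γ x) r} (v (x, y))

variable [TopologicalSpace X] [OpensMeasurableSpace X] [TopologicalSpace Y] [OpensMeasurableSpace Y]

/-- Property P1: for all `(x,y)` there is `p ∈ Γ^∞(x)` with `v(x,y) = ṽ(p,y) ≤ ũ(p,y)`. -/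
def P1 (Γ : X → Set (PM X)) (u v : X × Y → ℝ) : Prop :=
  ∀ x : X, ∀ y : Y, ∃ p ∈ reach Γ x,
    v (x, y) = iXY v p (dirac y) ∧ iXY v p (dirac y) ≤ iXY u p (dirac y)

/-- Property P2: for all `(x,y)` there is `q ∈ Λ^∞(y)` with `v(x,y) = ṽ(x,q) ≥ ũ(x,q)`. -/
def P2 (Λ : Y → Set (PM Y)) (u v : X × Y → ℝ) : Prop :=
  ∀ x : X, ∀ y : Y, ∃ q ∈ reach Λ y,
    v (x, y) = iXY v (dirac x) q ∧ iXY u (dirac x) q ≤ iXY v (dirac x) q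

/-- `w` satisfies the Shapley fixed point equation for discount factor `lam`:
`w(x,y) = max_{p∈Γ(x)} min_{q∈Λ(y)} (λ u(x,y) + (1-λ) w̃(p,q))
        = min_{q∈Λ(y)} max_{p∈Γ(x)} (λ u(x,y) + (1-λ) w̃(p,q))`. -/
def ShapleyEq (Γ : X → Set (PM X)) (Λ : Y → Set (PM Y)) (u : X × Y → ℝ)
    (lam : ℝ) (w : X × Y → ℝ) : Prop :=
  ∀ x : X, ∀ y : Y,
    IsGreatest {r | ∃ p ∈ Γ x,
      IsLeast ((fun q => lam * u (x, y) + (1 - lam) * iXY w p q) '' Λ y) r} (w (x, y)) ∧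
    IsLeast {r | ∃ q ∈ Λ y,
      IsGreatest ((fun p => lam * u (x, y) + (1 - lam) * iXY w p q) '' Γ x) r} (w (x, y))

end TwoPlayers

/-- A standard gambling game: compact metric state spaces, continuous payoff,
continuous transition multifunctions with nonempty convex compact values,
leavable and non expansive. -/
structure StdGame (X Y : Type*) [MetricSpace X] [MeasurableSpace X] [OpensMeasurableSpace X]
    [MetricSpace Y] [MeasurableSpace Y] [OpensMeasurableSpace Y] where
  G : X → Set (PM X)
  L : Y → Set (PM Y)
  u : X × Y → ℝ
  u_cont : Continuous u
  G_ne : ∀ x, (G x).Nonempty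
  G_cvx : ∀ x, PMConvex (G x)
  G_cpt : ∀ x, IsCompact (G x)
  G_cont : ∀ ε : ℝ, 0 < ε → ∃ α : ℝ, 0 < α ∧ ∀ x x' : X, dist x x' ≤ α →
    ∀ p ∈ G x, ∃ p' ∈ G x', dKR p p' ≤ ε
  G_leav : ∀ x, dirac x ∈ G x
  G_nonexp : ∀ x x' : X, ∀ p ∈ G x, ∃ p' ∈ G x', dKR p p' ≤ dist x x'
  L_ne : ∀ y, (L y).Nonempty
  L_cvx : ∀ y, PMConvex (L y)
  L_cpt : ∀ y, IsCompact (L y)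
  L_cont : ∀ ε : ℝ, 0 < ε → ∃ α : ℝ, 0 < α ∧ ∀ y y' : Y, dist y y' ≤ α →
    ∀ q ∈ L y, ∃ q' ∈ L y', dKR q q' ≤ ε
  L_leav : ∀ y, dirac y ∈ L y
  L_nonexp : ∀ y y' : Y, ∀ q ∈ L y, ∃ q' ∈ L y', dKR q q' ≤ dist y y'

end GG

namespace GG

/-! ### Auxiliary lemmas for statement3 -/

section AuxGeneric

lemma bdd_of_cont {Z : Type*} [MetricSpace Z] [CompactSpace Z] [Nonempty Z]
    (f : Z → ℝ) (hf : Continuous f) : ∃ C : ℝ, 0 ≤ C ∧ ∀ z, |f z| ≤ C := by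
  obtain ⟨z₀, -, hz₀⟩ := isCompact_univ.exists_isMaxOn univ_nonempty
    (hf.abs.continuousOn (s := univ))
  exact ⟨|f z₀|, abs_nonneg _, fun z => hz₀ (mem_univ z)⟩

lemma integrable_cont {Z : Type*} [MetricSpace Z] [CompactSpace Z] [MeasurableSpace Z]
    [OpensMeasurableSpace Z] (f : Z → ℝ) (hf : Continuous f) (μ : MeasureTheory.Measure Z)
    [IsFiniteMeasure μ] : Integrable f μ :=
  hf.integrable_of_hasCompactSupport (HasCompactSupport.of_compactSpace f)

lemma abs_int_le {Z : Type*} [MeasurableSpace Z] (μ : MeasureTheory.Measure Z)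
    [IsProbabilityMeasure μ] (f : Z → ℝ) (C : ℝ) (hC : ∀ z, |f z| ≤ C) :
    |∫ z, f z ∂μ| ≤ C := by
  have h := norm_integral_le_of_norm_le_const (μ := μ) (f := f) (C := C)
    (ae_of_all _ fun s => by simpa using hC s)
  simpa using h

end AuxGeneric

section AuxS

variable {S : Type*} [MeasurableSpace S] [MetricSpace S] [CompactSpace S] [Nonempty S]
  [BorelSpace S]

lemma iPM_dirac (f : S → ℝ) (s : S) : iPM f (dirac s) = f s := by
  simpa [iPM, dirac] using MeasureTheory.integral_dirac f s

lemma continuous_iPM (f : S → ℝ) (hf : Continuous f) :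
    Continuous fun p : PM S => iPM f p := by
  rw [continuous_iff_continuousAt]
  intro p₀
  have h := (MeasureTheory.ProbabilityMeasure.tendsto_iff_forall_integral_tendsto
    (μs := (id : PM S → PM S)) (F := 𝓝 p₀) (μ := p₀)).1 tendsto_id
    (BoundedContinuousFunction.mkOfCompact ⟨f, hf⟩)
  simpa [iPM, ContinuousAt] using h

lemma dKR_set_bddAbove (p q : PM S) :
    BddAbove {r | ∃ f : S → ℝ, LipschitzWith 1 f ∧ r = |iPM f p - iPM f q|} := by
  classical
  obtain ⟨x₀⟩ := ‹Nonempty S›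
  have hcd : Continuous fun x : S => dist x x₀ := continuous_id.dist continuous_const
  obtain ⟨R, hR0, hR⟩ : ∃ R : ℝ, 0 ≤ R ∧ ∀ x : S, dist x x₀ ≤ R := by
    obtain ⟨z, -, hz⟩ := isCompact_univ.exists_isMaxOn univ_nonempty
      (hcd.continuousOn (s := univ))
    exact ⟨dist z x₀, dist_nonneg, fun x => hz (mem_univ x)⟩
  refine ⟨2 * R, fun r hr => ?_⟩
  obtain ⟨f, hf, rfl⟩ := hr
  have key : ∀ t : PM S, |iPM f t - f x₀| ≤ R := by
    intro t
    have h1 : iPM f t - f x₀ = iPM (fun x => f x - f x₀) t := by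
      rw [iPM, iPM, integral_sub (integrable_cont f hf.continuous _)
        (integrable_const _)]
      simp
    rw [h1]
    refine abs_int_le _ _ R (fun s => ?_)
    calc |f s - f x₀| = dist (f s) (f x₀) := by rw [Real.dist_eq]
    _ ≤ 1 * dist s x₀ := hf.dist_le_mul s x₀
    _ ≤ R := by simpa using hR s
  calc |iPM f p - iPM f q| = |(iPM f p - f x₀) - (iPM f q - f x₀)| := by ring_nf
  _ ≤ |iPM f p - f x₀| + |iPM f q - f x₀| := abs_sub _ _
  _ ≤ R + R := add_le_add (key p) (key q)
  _ = 2 * R := by ring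

lemma abs_iPM_sub_le_dKR (p q : PM S) (f : S → ℝ) (K : NNReal) (hf : LipschitzWith K f) :
    |iPM f p - iPM f q| ≤ (K : ℝ) * dKR p q := by
  classical
  rcases eq_or_ne K 0 with rfl | hK
  · obtain ⟨x₀⟩ := ‹Nonempty S›
    have hconst : ∀ x, f x = f x₀ := by
      intro x
      have := hf.dist_le_mul x x₀
      simpa [dist_le_zero] using this
    have : iPM f p = iPM f q := by
      rw [iPM, iPM]
      rw [show f = fun _ => f x₀ from funext hconst]
      simp
    simp [this]
  · have hKpos : (0 : ℝ) < K := by positivity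
    set g : S → ℝ := fun x => (K : ℝ)⁻¹ * f x with hg
    have hg1 : LipschitzWith 1 g := by
      rw [lipschitzWith_iff_dist_le_mul]
      intro x y
      have h1 : |f x - f y| ≤ (K : ℝ) * dist x y := by
        simpa [Real.dist_eq] using hf.dist_le_mul x y
      have h2 : dist (g x) (g y) = (K : ℝ)⁻¹ * |f x - f y| := by
        rw [Real.dist_eq, hg]
        simp only []
        rw [← mul_sub, abs_mul, abs_of_nonneg (by positivity : (0:ℝ) ≤ (K : ℝ)⁻¹)]
      rw [h2]
      calc (K : ℝ)⁻¹ * |f x - f y| ≤ (K : ℝ)⁻¹ * ((K : ℝ) * dist x y) :=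
            mul_le_mul_of_nonneg_left h1 (by positivity)
      _ = (1 : NNReal) * dist x y := by field_simp; simp
    have hmem : |iPM g p - iPM g q| ∈
        {r | ∃ f : S → ℝ, LipschitzWith 1 f ∧ r = |iPM f p - iPM f q|} := ⟨g, hg1, rfl⟩
    have hle : |iPM g p - iPM g q| ≤ dKR p q := le_csSup (dKR_set_bddAbove p q) hmem
    have hgp : ∀ t : PM S, iPM g t = (K : ℝ)⁻¹ * iPM f t := by
      intro t; rw [iPM, iPM, hg]; exact integral_const_mul _ _
    rw [hgp, hgp, ← mul_sub, abs_mul,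
      abs_of_nonneg (by positivity : (0:ℝ) ≤ (K:ℝ)⁻¹)] at hle
    calc |iPM f p - iPM f q| = (K : ℝ) * ((K : ℝ)⁻¹ * |iPM f p - iPM f q|) := by
          field_simp
    _ ≤ (K : ℝ) * dKR p q := mul_le_mul_of_nonneg_left hle (le_of_lt hKpos)

end AuxS

section AuxLip

variable {S : Type*} [MetricSpace S] [CompactSpace S] [Nonempty S]

lemma lip_approx (f : S → ℝ) (hf : Continuous f) (δ : ℝ) (hδ : 0 < δ) :
    ∃ (K : NNReal) (g : S → ℝ), LipschitzWith K g ∧ ∀ x, |f x - g x| ≤ δ := by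
  classical
  obtain ⟨z₀, -, hz₀⟩ := isCompact_univ.exists_isMaxOn univ_nonempty
    (hf.abs.continuousOn (s := univ))
  set C : ℝ := |f z₀| with hCdef
  have hC0 : 0 ≤ C := abs_nonneg _
  have hC : ∀ z, |f z| ≤ C := fun z => hz₀ (mem_univ z)
  have huc : UniformContinuous f := CompactSpace.uniformContinuous_of_continuous hf
  obtain ⟨η, hη, hmod⟩ := Metric.uniformContinuous_iff.1 huc δ hδ
  obtain ⟨n, hn⟩ : ∃ n : ℕ, 2 * C / η < n := exists_nat_gt _
  have hnη : 2 * C ≤ (n : ℝ) * η := by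
    rw [div_lt_iff₀ hη] at hn
    nlinarith
  set g : S → ℝ := fun x => ⨅ y : S, (f y + n * dist x y) with hg
  have hbdd : ∀ x : S, BddBelow (range fun y : S => f y + n * dist x y) := by
    intro x
    refine ⟨-C, fun r hr => ?_⟩
    obtain ⟨y, rfl⟩ := hr
    have h1 := (abs_le.1 (hC y)).1
    have h2 : (0:ℝ) ≤ (n:ℝ) * dist x y := by positivity
    dsimp only
    linarith
  have hgle : ∀ x, g x ≤ f x := by
    intro x
    have := ciInf_le (hbdd x) x
    simpa [hg] using this
  have hgge : ∀ x, f x - δ ≤ g x := by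
    intro x
    apply le_ciInf
    intro y
    rcases lt_or_ge (dist x y) η with h | h
    · have h1 : |f x - f y| ≤ δ := by
        have := hmod (a := x) (b := y) (by simpa [dist_comm] using h)
        rw [Real.dist_eq] at this
        exact le_of_lt this
      have : (0:ℝ) ≤ (n:ℝ) * dist x y := by positivity
      nlinarith [(abs_le.1 h1).1, (abs_le.1 h1).2]
    · have h2 : 2 * C ≤ (n : ℝ) * dist x y := by
        calc 2 * C ≤ (n:ℝ) * η := hnη
        _ ≤ (n:ℝ) * dist x y := by
            apply mul_le_mul_of_nonneg_left h (by positivity)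
      nlinarith [(abs_le.1 (hC x)).2, (abs_le.1 (hC y)).1]
  have hlip : LipschitzWith (n : NNReal) g := by
    rw [lipschitzWith_iff_dist_le_mul]
    have key : ∀ x x' : S, g x ≤ g x' + n * dist x x' := by
      intro x x'
      have hlb : ∀ y : S, g x - (n:ℝ) * dist x x' ≤ f y + n * dist x' y := by
        intro y
        have h1 : g x ≤ f y + n * dist x y := by
          have := ciInf_le (hbdd x) y
          simpa [hg] using this
        have h2 : dist x y ≤ dist x x' + dist x' y := dist_triangle x x' y
        nlinarith [Nat.cast_nonneg (α := ℝ) n]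
      have := le_ciInf hlb
      simp only [hg] at *
      linarith
    intro x x'
    rw [Real.dist_eq, abs_le]
    constructor
    · have := key x' x
      rw [dist_comm x' x] at this
      simp only [NNReal.coe_natCast]
      linarith
    · have := key x x'
      simp only [NNReal.coe_natCast]
      linarith
  exact ⟨n, g, hlip, fun x => by
    rw [abs_le]; constructor <;> [linarith [hgle x]; linarith [hgge x]]⟩

end AuxLip

section AuxUSC

/-- Sequential upper semicontinuity (with slack). -/
def SeqUSC {Z : Type*} [TopologicalSpace Z] (f : Z → ℝ) : Prop :=
  ∀ (z : Z) (u : ℕ → Z), Tendsto u atTop (𝓝 z) → ∀ δ : ℝ, 0 < δ →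
    ∀ᶠ n in atTop, f (u n) ≤ f z + δ

variable {Z : Type*} [MetricSpace Z] [CompactSpace Z] [Nonempty Z]

lemma exists_max_of_seqUSC (f : Z → ℝ) (hb : BddAbove (Set.range f)) (h : SeqUSC f) :
    ∃ z : Z, ∀ w, f w ≤ f z := by
  classical
  set S := sSup (Set.range f) with hS
  have hne : (Set.range f).Nonempty := Set.range_nonempty f
  have hseq : ∀ n : ℕ, ∃ z : Z, S - 1 / (n + 1) < f z := by
    intro n
    have hlt : S - 1 / (n + 1 : ℝ) < S := by
      have : (0:ℝ) < 1 / (n + 1) := by positivity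
      linarith
    obtain ⟨r, ⟨z, rfl⟩, hr⟩ := exists_lt_of_lt_csSup hne hlt
    exact ⟨z, hr⟩
  choose u hu using hseq
  obtain ⟨zb, -, σ, hσ, hconv⟩ := isCompact_univ.tendsto_subseq (x := u)
    (fun n => Set.mem_univ _)
  refine ⟨zb, fun w => ?_⟩
  have hzS : S ≤ f zb := by
    by_contra hlt
    push_neg at hlt
    set δ := (S - f zb) / 2 with hδdef
    have hδ : 0 < δ := by simp only [hδdef]; linarith
    have h1 := h zb (u ∘ σ) hconv δ hδ
    have h2 : ∀ᶠ n in atTop, 1 / ((σ n : ℝ) + 1) ≤ δ := by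
      obtain ⟨N, hN⟩ := exists_nat_gt (1 / δ)
      filter_upwards [eventually_ge_atTop N] with n hn
      have hσn : (N : ℝ) ≤ σ n := by
        exact_mod_cast le_trans hn (StrictMono.le_apply hσ)
      rw [div_le_iff₀ (by positivity)]
      rw [div_lt_iff₀ hδ] at hN
      nlinarith [hδ.le]
    obtain ⟨n, hn1, hn2⟩ := (h1.and h2).exists
    have := hu (σ n)
    simp only [Function.comp] at hn1
    linarith
  exact le_trans (le_csSup hb ⟨w, rfl⟩) hzS

lemma SeqUSC.add {f g : Z → ℝ} (hf : SeqUSC f) (hg : SeqUSC g) : SeqUSC (f + g) := by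
  intro z u hu δ hδ
  filter_upwards [hf z u hu (δ/2) (by linarith), hg z u hu (δ/2) (by linarith)] with n h1 h2
  simp only [Pi.add_apply]
  linarith

lemma SeqUSC.max' {f g : Z → ℝ} (hf : SeqUSC f) (hg : SeqUSC g) :
    SeqUSC (fun z => max (f z) (g z)) := by
  intro z u hu δ hδ
  filter_upwards [hf z u hu δ hδ, hg z u hu δ hδ] with n h1 h2
  exact max_le (le_trans h1 (by simp [add_le_add_iff_right, le_max_left]))
    (le_trans h2 (by simp [add_le_add_iff_right, le_max_right]))

end AuxUSC

section AuxXY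

variable {X Y : Type*} [MetricSpace X] [CompactSpace X] [Nonempty X]
    [MeasurableSpace X] [BorelSpace X]
    [MetricSpace Y] [CompactSpace Y] [Nonempty Y] [MeasurableSpace Y] [BorelSpace Y]

lemma iXY_dirac_right (v : X × Y → ℝ) (p : PM X) (y : Y) :
    iXY v p (dirac y) = ∫ x, v (x, y) ∂(p : MeasureTheory.Measure X) := by
  rw [iXY]
  apply integral_congr_ae
  filter_upwards with x
  exact MeasureTheory.integral_dirac (fun y' => v (x, y')) y

lemma iXY_dirac_left (v : X × Y → ℝ) (x : X) (q : PM Y) :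
    iXY v (dirac x) q = ∫ y, v (x, y) ∂(q : MeasureTheory.Measure Y) :=
  MeasureTheory.integral_dirac (fun x' => ∫ y, v (x', y) ∂(q : MeasureTheory.Measure Y)) x

lemma iXY_dirac_dirac (v : X × Y → ℝ) (x : X) (y : Y) :
    iXY v (dirac x) (dirac y) = v (x, y) := by
  rw [iXY_dirac_left]
  exact MeasureTheory.integral_dirac (fun y' => v (x, y')) y

lemma abs_iXY_le (v : X × Y → ℝ) (C : ℝ) (hC : ∀ z, |v z| ≤ C) (p : PM X) (q : PM Y) :
    |iXY v p q| ≤ C := by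
  rw [iXY]
  refine abs_int_le _ _ C fun x => ?_
  exact abs_int_le _ _ C fun y => hC (x, y)

lemma cont_int_right (v : X × Y → ℝ) (hv : Continuous v) (q : MeasureTheory.Measure Y)
    [IsFiniteMeasure q] : Continuous fun x : X => ∫ y, v (x, y) ∂q := by
  obtain ⟨C, hC0, hC⟩ := bdd_of_cont v hv
  apply continuous_of_dominated (bound := fun _ => C)
  · intro x
    exact (hv.comp (by fun_prop : Continuous fun y : Y => ((x, y) : X × Y))).aestronglyMeasurable
  · intro x
    exact ae_of_all _ fun y => by simpa using hC (x, y)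
  · exact integrable_const C
  · exact ae_of_all _ fun y => hv.comp (by fun_prop)

lemma cont_int_left (v : X × Y → ℝ) (hv : Continuous v) (p : MeasureTheory.Measure X)
    [IsFiniteMeasure p] : Continuous fun y : Y => ∫ x, v (x, y) ∂p := by
  obtain ⟨C, hC0, hC⟩ := bdd_of_cont v hv
  apply continuous_of_dominated (bound := fun _ => C)
  · intro y
    exact (hv.comp (by fun_prop : Continuous fun x : X => ((x, y) : X × Y))).aestronglyMeasurable
  · intro y
    exact ae_of_all _ fun x => by simpa using hC (x, y)
  · exact integrable_const C
  · exact ae_of_all _ fun x => hv.comp (by fun_prop)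

/-- The excessivity gap. -/
def Egap (v : X × Y → ℝ) (G : X → Set (PM X)) (x : X) (y : Y) : ℝ :=
  sSup ((fun p => iXY v p (dirac y) - v (x, y)) '' G x)

/-- The depressivity gap. -/
def Dgap (v : X × Y → ℝ) (L : Y → Set (PM Y)) (x : X) (y : Y) : ℝ :=
  sSup ((fun q => v (x, y) - iXY v (dirac x) q) '' L y)

lemma Egap_bddAbove (v : X × Y → ℝ) (C : ℝ) (hC : ∀ z, |v z| ≤ C)
    (G : X → Set (PM X)) (x : X) (y : Y) :
    BddAbove ((fun p => iXY v p (dirac y) - v (x, y)) '' G x) := by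
  refine ⟨2 * C, ?_⟩
  rintro r ⟨p, hp, rfl⟩
  have h1 := (abs_le.1 (abs_iXY_le v C hC p (dirac y))).2
  have h2 := (abs_le.1 (hC (x, y))).1
  simp only []
  linarith

lemma Dgap_bddAbove (v : X × Y → ℝ) (C : ℝ) (hC : ∀ z, |v z| ≤ C)
    (L : Y → Set (PM Y)) (x : X) (y : Y) :
    BddAbove ((fun q => v (x, y) - iXY v (dirac x) q) '' L y) := by
  refine ⟨2 * C, ?_⟩
  rintro r ⟨q, hq, rfl⟩
  have h1 := (abs_le.1 (abs_iXY_le v C hC (dirac x) q)).1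
  have h2 := (abs_le.1 (hC (x, y))).2
  simp only []
  linarith

lemma le_Egap (v : X × Y → ℝ) (C : ℝ) (hC : ∀ z, |v z| ≤ C)
    (G : X → Set (PM X)) {x : X} {y : Y} {p : PM X} (hp : p ∈ G x) :
    iXY v p (dirac y) - v (x, y) ≤ Egap v G x y :=
  le_csSup (Egap_bddAbove v C hC G x y) ⟨p, hp, rfl⟩

lemma le_Dgap (v : X × Y → ℝ) (C : ℝ) (hC : ∀ z, |v z| ≤ C)
    (L : Y → Set (PM Y)) {x : X} {y : Y} {q : PM Y} (hq : q ∈ L y) :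
    v (x, y) - iXY v (dirac x) q ≤ Dgap v L x y :=
  le_csSup (Dgap_bddAbove v C hC L x y) ⟨q, hq, rfl⟩

lemma Egap_le (v : X × Y → ℝ) (G : X → Set (PM X)) {x : X} {y : Y}
    (hne : (G x).Nonempty) {b : ℝ}
    (h : ∀ p ∈ G x, iXY v p (dirac y) - v (x, y) ≤ b) : Egap v G x y ≤ b := by
  apply csSup_le (hne.image _)
  rintro r ⟨p, hp, rfl⟩
  exact h p hp

lemma Dgap_le (v : X × Y → ℝ) (L : Y → Set (PM Y)) {x : X} {y : Y}
    (hne : (L y).Nonempty) {b : ℝ}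
    (h : ∀ q ∈ L y, v (x, y) - iXY v (dirac x) q ≤ b) : Dgap v L x y ≤ b := by
  apply csSup_le (hne.image _)
  rintro r ⟨q, hq, rfl⟩
  exact h q hq

end AuxXY

section AuxUSC2

variable {X Y : Type*} [MetricSpace X] [CompactSpace X] [Nonempty X]
    [MeasurableSpace X] [BorelSpace X]
    [MetricSpace Y] [CompactSpace Y] [Nonempty Y] [MeasurableSpace Y] [BorelSpace Y]

lemma abs_int_sub_le {Z : Type*} [MetricSpace Z] [CompactSpace Z] [MeasurableSpace Z]
    [OpensMeasurableSpace Z] (μ : MeasureTheory.Measure Z) [IsProbabilityMeasure μ]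
    (f₁ f₂ : Z → ℝ) (h₁ : Continuous f₁) (h₂ : Continuous f₂) (c : ℝ)
    (h : ∀ z, |f₁ z - f₂ z| ≤ c) :
    |(∫ z, f₁ z ∂μ) - ∫ z, f₂ z ∂μ| ≤ c := by
  rw [← integral_sub (integrable_cont f₁ h₁ μ) (integrable_cont f₂ h₂ μ)]
  exact abs_int_le _ _ c h

lemma seqUSC_Egap (g : StdGame X Y) (v : X × Y → ℝ) (hv : Continuous v) :
    SeqUSC fun z : X × Y => Egap v g.G z.1 z.2 := by
  classical
  obtain ⟨Cv, hCv0, hCv⟩ := bdd_of_cont v hv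
  intro zb u hu δ hδ
  have hfc : Continuous fun x' : X => v (x', zb.2) := by fun_prop
  obtain ⟨K, g₀, hg₀lip, hg₀⟩ := lip_approx (fun x' => v (x', zb.2)) hfc (δ/8) (by linarith)
  have hg₀c : Continuous g₀ := hg₀lip.continuous
  have huc : UniformContinuous v := CompactSpace.uniformContinuous_of_continuous hv
  obtain ⟨η, hη, hmod⟩ := Metric.uniformContinuous_iff.1 huc (δ/8) (by linarith)
  set η' : ℝ := min η (δ / (8 * ((K : ℝ) + 1))) with hη'def
  have hη' : 0 < η' := lt_min hη (by positivity)
  obtain ⟨N, hN⟩ := Metric.tendsto_atTop.1 hu η' hη'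
  filter_upwards [eventually_ge_atTop N] with n hn
  have hdist : dist (u n) zb < η' := hN n hn
  have hd1 : dist (u n).1 zb.1 < η' :=
    lt_of_le_of_lt (by rw [Prod.dist_eq]; exact le_max_left _ _) hdist
  have hd2 : dist (u n).2 zb.2 < η' :=
    lt_of_le_of_lt (by rw [Prod.dist_eq]; exact le_max_right _ _) hdist
  apply Egap_le v g.G (g.G_ne (u n).1)
  intro p hpG
  obtain ⟨p', hp'G, hdKR⟩ := g.G_nonexp (u n).1 zb.1 p hpG
  rw [iXY_dirac_right]
  -- a1
  have ha1 : |(∫ x', v (x', (u n).2) ∂(p : MeasureTheory.Measure X)) -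
      ∫ x', v (x', zb.2) ∂(p : MeasureTheory.Measure X)| ≤ δ/8 := by
    apply abs_int_sub_le _ _ _ (by fun_prop) hfc
    intro x'
    have hdd : dist ((x', (u n).2) : X × Y) (x', zb.2) < η := by
      rw [Prod.dist_eq]
      simp only [dist_self]
      rw [max_eq_right dist_nonneg]
      exact lt_of_lt_of_le hd2 (min_le_left _ _)
    have := hmod hdd
    rw [Real.dist_eq] at this
    exact le_of_lt this
  -- a2
  have ha2 : |(∫ x', v (x', zb.2) ∂(p : MeasureTheory.Measure X)) -
      ∫ x', g₀ x' ∂(p : MeasureTheory.Measure X)| ≤ δ/8 :=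
    abs_int_sub_le _ _ _ hfc hg₀c _ hg₀
  -- a3
  have ha3 : |(∫ x', g₀ x' ∂(p : MeasureTheory.Measure X)) -
      ∫ x', g₀ x' ∂(p' : MeasureTheory.Measure X)| ≤ δ/8 := by
    have h0 := abs_iPM_sub_le_dKR p p' g₀ K hg₀lip
    have h1 : dKR p p' ≤ δ / (8 * ((K : ℝ) + 1)) :=
      le_trans hdKR (le_trans hd1.le (min_le_right _ _))
    have h2 : (K : ℝ) * dKR p p' ≤ δ/8 := by
      calc (K : ℝ) * dKR p p' ≤ (K : ℝ) * (δ / (8 * ((K : ℝ) + 1))) :=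
            mul_le_mul_of_nonneg_left h1 K.coe_nonneg
      _ ≤ δ/8 := by
          rw [← mul_div_assoc, div_le_div_iff₀ (by positivity) (by norm_num : (0:ℝ) < 8)]
          nlinarith [K.coe_nonneg, hδ.le]
    calc |(∫ x', g₀ x' ∂(p : MeasureTheory.Measure X)) -
        ∫ x', g₀ x' ∂(p' : MeasureTheory.Measure X)| = |iPM g₀ p - iPM g₀ p'| := rfl
    _ ≤ (K : ℝ) * dKR p p' := h0
    _ ≤ δ/8 := h2
  -- a4
  have ha4 : |(∫ x', g₀ x' ∂(p' : MeasureTheory.Measure X)) -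
      ∫ x', v (x', zb.2) ∂(p' : MeasureTheory.Measure X)| ≤ δ/8 := by
    apply abs_int_sub_le _ _ _ hg₀c hfc
    intro x'
    have := hg₀ x'
    rw [abs_sub_comm] at this
    exact this
  -- a5
  have ha5 : (∫ x', v (x', zb.2) ∂(p' : MeasureTheory.Measure X)) - v (zb.1, zb.2)
      ≤ Egap v g.G zb.1 zb.2 := by
    have := le_Egap v Cv hCv g.G (y := zb.2) hp'G
    rwa [iXY_dirac_right] at this
  -- a6
  have ha6 : |v ((u n).1, (u n).2) - v (zb.1, zb.2)| ≤ δ/8 := by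
    have hdd : dist (((u n).1, (u n).2) : X × Y) (zb.1, zb.2) < η := by
      rw [Prod.dist_eq]
      exact lt_of_lt_of_le (max_lt hd1 hd2) (min_le_left _ _)
    have := hmod hdd
    rw [Real.dist_eq] at this
    exact le_of_lt this
  have e1 := (abs_le.1 ha1).2
  have e2 := (abs_le.1 ha2).2
  have e3 := (abs_le.1 ha3).2
  have e4 := (abs_le.1 ha4).2
  have e6 := (abs_le.1 ha6).1
  linarith

lemma seqUSC_Dgap (g : StdGame X Y) (v : X × Y → ℝ) (hv : Continuous v) :
    SeqUSC fun z : X × Y => Dgap v g.L z.1 z.2 := by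
  classical
  obtain ⟨Cv, hCv0, hCv⟩ := bdd_of_cont v hv
  intro zb u hu δ hδ
  have hfc : Continuous fun y' : Y => v (zb.1, y') := by fun_prop
  obtain ⟨K, g₀, hg₀lip, hg₀⟩ := lip_approx (fun y' => v (zb.1, y')) hfc (δ/8) (by linarith)
  have hg₀c : Continuous g₀ := hg₀lip.continuous
  have huc : UniformContinuous v := CompactSpace.uniformContinuous_of_continuous hv
  obtain ⟨η, hη, hmod⟩ := Metric.uniformContinuous_iff.1 huc (δ/8) (by linarith)
  set η' : ℝ := min η (δ / (8 * ((K : ℝ) + 1))) with hη'def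
  have hη' : 0 < η' := lt_min hη (by positivity)
  obtain ⟨N, hN⟩ := Metric.tendsto_atTop.1 hu η' hη'
  filter_upwards [eventually_ge_atTop N] with n hn
  have hdist : dist (u n) zb < η' := hN n hn
  have hd1 : dist (u n).1 zb.1 < η' :=
    lt_of_le_of_lt (by rw [Prod.dist_eq]; exact le_max_left _ _) hdist
  have hd2 : dist (u n).2 zb.2 < η' :=
    lt_of_le_of_lt (by rw [Prod.dist_eq]; exact le_max_right _ _) hdist
  apply Dgap_le v g.L (g.L_ne (u n).2)
  intro q hqL
  obtain ⟨q', hq'L, hdKR⟩ := g.L_nonexp (u n).2 zb.2 q hqL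
  rw [iXY_dirac_left]
  -- b1
  have hb1 : |(∫ y', v ((u n).1, y') ∂(q : MeasureTheory.Measure Y)) -
      ∫ y', v (zb.1, y') ∂(q : MeasureTheory.Measure Y)| ≤ δ/8 := by
    apply abs_int_sub_le _ _ _ (by fun_prop) hfc
    intro y'
    have hdd : dist (((u n).1, y') : X × Y) (zb.1, y') < η := by
      rw [Prod.dist_eq]
      simp only [dist_self]
      rw [max_eq_left dist_nonneg]
      exact lt_of_lt_of_le hd1 (min_le_left _ _)
    have := hmod hdd
    rw [Real.dist_eq] at this
    exact le_of_lt this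
  -- b2
  have hb2 : |(∫ y', v (zb.1, y') ∂(q : MeasureTheory.Measure Y)) -
      ∫ y', g₀ y' ∂(q : MeasureTheory.Measure Y)| ≤ δ/8 :=
    abs_int_sub_le _ _ _ hfc hg₀c _ hg₀
  -- b3
  have hb3 : |(∫ y', g₀ y' ∂(q : MeasureTheory.Measure Y)) -
      ∫ y', g₀ y' ∂(q' : MeasureTheory.Measure Y)| ≤ δ/8 := by
    have h0 := abs_iPM_sub_le_dKR q q' g₀ K hg₀lip
    have h1 : dKR q q' ≤ δ / (8 * ((K : ℝ) + 1)) :=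
      le_trans hdKR (le_trans hd2.le (min_le_right _ _))
    have h2 : (K : ℝ) * dKR q q' ≤ δ/8 := by
      calc (K : ℝ) * dKR q q' ≤ (K : ℝ) * (δ / (8 * ((K : ℝ) + 1))) :=
            mul_le_mul_of_nonneg_left h1 K.coe_nonneg
      _ ≤ δ/8 := by
          rw [← mul_div_assoc, div_le_div_iff₀ (by positivity) (by norm_num : (0:ℝ) < 8)]
          nlinarith [K.coe_nonneg, hδ.le]
    calc |(∫ y', g₀ y' ∂(q : MeasureTheory.Measure Y)) -
        ∫ y', g₀ y' ∂(q' : MeasureTheory.Measure Y)| = |iPM g₀ q - iPM g₀ q'| := rfl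
    _ ≤ (K : ℝ) * dKR q q' := h0
    _ ≤ δ/8 := h2
  -- b4
  have hb4 : |(∫ y', g₀ y' ∂(q' : MeasureTheory.Measure Y)) -
      ∫ y', v (zb.1, y') ∂(q' : MeasureTheory.Measure Y)| ≤ δ/8 := by
    apply abs_int_sub_le _ _ _ hg₀c hfc
    intro y'
    have := hg₀ y'
    rw [abs_sub_comm] at this
    exact this
  -- b5
  have hb5 : v (zb.1, zb.2) - (∫ y', v (zb.1, y') ∂(q' : MeasureTheory.Measure Y))
      ≤ Dgap v g.L zb.1 zb.2 := by
    have := le_Dgap v Cv hCv g.L (x := zb.1) hq'L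
    rwa [iXY_dirac_left] at this
  -- b6
  have hb6 : |v ((u n).1, (u n).2) - v (zb.1, zb.2)| ≤ δ/8 := by
    have hdd : dist (((u n).1, (u n).2) : X × Y) (zb.1, zb.2) < η := by
      rw [Prod.dist_eq]
      exact lt_of_lt_of_le (max_lt hd1 hd2) (min_le_left _ _)
    have := hmod hdd
    rw [Real.dist_eq] at this
    exact le_of_lt this
  have e1 := (abs_le.1 hb1).1
  have e2 := (abs_le.1 hb2).1
  have e3 := (abs_le.1 hb3).1
  have e4 := (abs_le.1 hb4).1
  have e6 := (abs_le.1 hb6).2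
  linarith

end AuxUSC2

/-- in a standard gambling game where the gambling house of Player 1 is weakly
acyclic, every balanced continuous function is excessive and depressive. -/
theorem statement3
    {X Y : Type*} [MetricSpace X] [CompactSpace X] [Nonempty X]
    [MeasurableSpace X] [BorelSpace X]
    [MetricSpace Y] [CompactSpace Y] [Nonempty Y]
    [MeasurableSpace Y] [BorelSpace Y]
    (g : StdGame X Y)
    (hwa : AcyclicFor g.G)
    (v : X × Y → ℝ) (hv : Continuous v) (hbal : Balanced g.G g.L v) :
    Excessive g.G v ∧ Depressive g.L v := by
  classical
  obtain ⟨φ, hφm, ⟨C0, hC0⟩, hφlsc, hargmax⟩ := hwa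
  obtain ⟨Cv, hCv0, hCv⟩ := bdd_of_cont v hv
  have hC0nn : 0 ≤ C0 := le_trans (abs_nonneg _) (hC0 (Classical.arbitrary X))
  -- integrability of φ
  have hφint : ∀ p : PM X, Integrable φ (p : MeasureTheory.Measure X) := fun p =>
    (integrable_const C0).mono' hφm.aestronglyMeasurable
      (ae_of_all _ fun x => by simpa using hC0 x)
  -- the acyclicity consequences
  have hphi_dirac : ∀ x : X, iPM φ (dirac x) = φ x := fun x => iPM_dirac φ x
  have hphi_le : ∀ x : X, ∀ p ∈ g.G x, iPM φ p ≤ φ x := by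
    intro x p hp
    have hmem : dirac x ∈ argmaxOn (iPM φ) (g.G x) := by
      rw [hargmax x]; exact rfl
    have h2 := hmem.2 p hp
    rwa [hphi_dirac] at h2
  have hphi_lt : ∀ x : X, ∀ p ∈ g.G x, p ≠ dirac x → iPM φ p < φ x := by
    intro x p hp hne
    have hnot : p ∉ argmaxOn (iPM φ) (g.G x) := by
      rw [hargmax x]; simpa using hne
    rw [argmaxOn, mem_sep_iff] at hnot
    push_neg at hnot
    obtain ⟨q, hq, hlt⟩ := hnot hp
    exact lt_of_lt_of_le hlt (hphi_le x q hq)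
  -- balancedness consequences
  have hbal1 : ∀ x y, ∃ p ∈ g.G x, ∀ q ∈ g.L y, v (x, y) ≤ iXY v p q := by
    intro x y
    obtain ⟨p, hp, hleast⟩ := (hbal x y).1.1
    exact ⟨p, hp, fun q hq => hleast.2 ⟨q, hq, rfl⟩⟩
  have hbal2 : ∀ x y, ∃ q ∈ g.L y, ∀ p ∈ g.G x, iXY v p q ≤ v (x, y) := by
    intro x y
    obtain ⟨q, hq, hgreat⟩ := (hbal x y).2.1
    exact ⟨q, hq, fun p hp => hgreat.2 ⟨p, hp, rfl⟩⟩
  -- main claim: both gaps vanish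
  suffices hkey : ∀ x y, Egap v g.G x y ≤ 0 ∧ Dgap v g.L x y ≤ 0 by
    constructor
    · intro x y
      constructor
      · exact ⟨dirac x, g.G_leav x, iXY_dirac_dirac v x y⟩
      · rintro r ⟨p, hp, rfl⟩
        have h1 := le_Egap v Cv hCv g.G (y := y) hp
        have h2 := (hkey x y).1
        simp only []
        linarith
    · intro x y
      constructor
      · exact ⟨dirac y, g.L_leav y, iXY_dirac_dirac v x y⟩
      · rintro r ⟨q, hq, rfl⟩
        have h1 := le_Dgap v Cv hCv g.L (x := x) hq
        have h2 := (hkey x y).2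
        simp only []
        linarith
  by_contra hcon
  push_neg at hcon
  obtain ⟨xh, yh, hxy⟩ := hcon
  have hβ : 0 < max (Egap v g.G xh yh) (Dgap v g.L xh yh) := by
    rcases lt_or_ge 0 (Egap v g.G xh yh) with h | h
    · exact lt_max_of_lt_left h
    · exact lt_max_of_lt_right (hxy h)
  set β₀ : ℝ := max (Egap v g.G xh yh) (Dgap v g.L xh yh) with hβ₀def
  set ε : ℝ := β₀ / (2 * C0 + 2) with hεdef
  have hε : 0 < ε := by
    apply div_pos hβ
    linarith
  set Ψ : X × Y → ℝ :=
    fun z => max (Egap v g.G z.1 z.2) (Dgap v g.L z.1 z.2) - ε * φ z.1 with hΨdef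
  -- Ψ is sequentially usc
  have hU3 : SeqUSC (fun z : X × Y => -(ε * φ z.1)) := by
    intro z u hu δ hδ
    have hx : Tendsto (fun n => (u n).1) atTop (𝓝 z.1) :=
      (continuous_fst.tendsto z).comp hu
    have hlt : φ z.1 - δ / ε < φ z.1 := by
      have : 0 < δ / ε := by positivity
      linarith
    have hls := hφlsc z.1 (φ z.1 - δ / ε) hlt
    filter_upwards [hx.eventually hls] with n hn
    have h2 : ε * (φ z.1 - δ / ε) ≤ ε * φ (u n).1 :=
      mul_le_mul_of_nonneg_left hn.le hε.le
    have h3 : ε * (δ / ε) = δ := by field_simp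
    nlinarith [h2, h3]
  have hUΨ : SeqUSC Ψ := by
    have h12 := (seqUSC_Egap g v hv).max' (seqUSC_Dgap g v hv)
    intro z u hu δ hδ
    filter_upwards [h12 z u hu (δ/2) (by linarith), hU3 z u hu (δ/2) (by linarith)]
      with n h1 h2
    simp only [hΨdef]
    linarith
  have hbddΨ : BddAbove (Set.range Ψ) := by
    refine ⟨2 * Cv + ε * C0, ?_⟩
    rintro r ⟨z, rfl⟩
    have h1 : Egap v g.G z.1 z.2 ≤ 2 * Cv := by
      apply Egap_le v g.G (g.G_ne z.1)
      intro p hp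
      have ha := (abs_le.1 (abs_iXY_le v Cv hCv p (dirac z.2))).2
      have hb := (abs_le.1 (hCv (z.1, z.2))).1
      linarith
    have h2 : Dgap v g.L z.1 z.2 ≤ 2 * Cv := by
      apply Dgap_le v g.L (g.L_ne z.2)
      intro q hq
      have ha := (abs_le.1 (abs_iXY_le v Cv hCv (dirac z.1) q)).1
      have hb := (abs_le.1 (hCv (z.1, z.2))).2
      linarith
    have h3 : -(ε * φ z.1) ≤ ε * C0 := by
      have := (abs_le.1 (hC0 z.1)).1
      nlinarith [hε.le]
    simp only [hΨdef]
    have := max_le h1 h2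
    linarith
  obtain ⟨zb, hzb⟩ := exists_max_of_seqUSC Ψ hbddΨ hUΨ
  set S : ℝ := Ψ zb with hSdef
  -- the key contradiction step for the excessivity gap
  have caseE : ∀ x : X, ∀ y : Y,
      S + ε * φ x ≤ Egap v g.G x y → 0 < Egap v g.G x y → False := by
    intro x y hES hpos
    have hcont : ContinuousOn (fun p : PM X => iXY v p (dirac y)) (g.G x) := by
      have h1 : (fun p : PM X => iXY v p (dirac y))
          = fun p => iPM (fun x' => v (x', y)) p := by
        funext p
        rw [iXY_dirac_right]
        rfl
      rw [h1]
      exact (continuous_iPM _ (by fun_prop)).continuousOn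
    obtain ⟨pb, hpbG, hpbmax⟩ := (g.G_cpt x).exists_isMaxOn (g.G_ne x) hcont
    have hEeq : Egap v g.G x y = iXY v pb (dirac y) - v (x, y) := by
      apply IsGreatest.csSup_eq
      constructor
      · exact ⟨pb, hpbG, rfl⟩
      · rintro r ⟨p, hp, rfl⟩
        have h5 : iXY v p (dirac y) ≤ iXY v pb (dirac y) := hpbmax hp
        show iXY v p (dirac y) - v (x, y) ≤ _
        linarith
    have hpbne : pb ≠ dirac x := by
      intro h
      rw [h, iXY_dirac_dirac] at hEeq
      rw [hEeq] at hpos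
      simp at hpos
    have hφlt : iPM φ pb < φ x := hphi_lt x pb hpbG hpbne
    obtain ⟨qs, hqsL, hqs⟩ := hbal2 x y
    set w : X → ℝ := fun z => ∫ y', v (z, y') ∂(qs : MeasureTheory.Measure Y) with hwdef
    have hwcont : Continuous w := cont_int_right v hv _
    have hvy : Continuous fun z : X => v (z, y) := by fun_prop
    have hgap_int : iXY v pb (dirac y) - iXY v pb qs
        = ∫ z, (v (z, y) - w z) ∂(pb : MeasureTheory.Measure X) := by
      rw [iXY_dirac_right, iXY,
        integral_sub (integrable_cont _ hvy _) (integrable_cont w hwcont _)]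
    have hlow : Egap v g.G x y ≤ ∫ z, (v (z, y) - w z) ∂(pb : MeasureTheory.Measure X) := by
      rw [← hgap_int, hEeq]
      have := hqs pb hpbG
      linarith
    have hpt : ∀ z : X, v (z, y) - w z ≤ S + ε * φ z := by
      intro z
      have h1 : v (z, y) - w z ≤ Dgap v g.L z y := by
        have := le_Dgap v Cv hCv g.L (x := z) (y := y) hqsL
        rwa [iXY_dirac_left] at this
      have h2 : Ψ (z, y) ≤ S := hzb (z, y)
      simp only [hΨdef] at h2
      have h3 : Dgap v g.L z y ≤ max (Egap v g.G z y) (Dgap v g.L z y) :=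
        le_max_right _ _
      linarith
    have hint : (∫ z, (v (z, y) - w z) ∂(pb : MeasureTheory.Measure X))
        ≤ S + ε * iPM φ pb := by
      have hi1 : Integrable (fun z => v (z, y) - w z) (pb : MeasureTheory.Measure X) :=
        integrable_cont _ (hvy.sub hwcont) _
      have hi2 : Integrable (fun z => S + ε * φ z) (pb : MeasureTheory.Measure X) :=
        (integrable_const S).add ((hφint pb).const_mul ε)
      have hm := integral_mono hi1 hi2 hpt
      rw [integral_add (integrable_const S) ((hφint pb).const_mul ε),
        integral_const, integral_const_mul] at hm
      simpa [iPM] using hm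
    have hfin : S + ε * iPM φ pb < S + ε * φ x := by nlinarith [hφlt, hε]
    linarith
  -- analyze the maximizer
  have hSlb : β₀ - ε * C0 ≤ S := by
    have h1 := hzb (xh, yh)
    have h2 : Ψ (xh, yh) = β₀ - ε * φ xh := by simp only [hΨdef, hβ₀def]
    have h3 := (abs_le.1 (hC0 xh)).2
    have h4 := hzb (xh, yh)
    nlinarith [hε.le]
  set M : ℝ := S + ε * φ zb.1 with hMdef
  have hMeq : max (Egap v g.G zb.1 zb.2) (Dgap v g.L zb.1 zb.2) = M := by
    simp only [hMdef, hSdef, hΨdef]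
    ring
  have hM0 : 0 < M := by
    have h3 := (abs_le.1 (hC0 zb.1)).1
    have h4 : 2 * (ε * C0) < β₀ := by
      have h5 : ε * (2 * C0 + 2) = β₀ := by
        rw [hεdef]; field_simp
      nlinarith [hε]
    simp only [hMdef]
    nlinarith [hSlb, hε.le]
  rcases le_or_gt (Dgap v g.L zb.1 zb.2) (Egap v g.G zb.1 zb.2) with hcase | hcase
  · apply caseE zb.1 zb.2
    · rw [max_eq_left hcase] at hMeq
      rw [hMeq]
    · rw [max_eq_left hcase] at hMeq
      rw [hMeq]; exact hM0
  · have hDeq0 : Dgap v g.L zb.1 zb.2 = M := by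
      rw [max_eq_right hcase.le] at hMeq
      exact hMeq
    -- attain the Dgap sup
    have hcontq : ContinuousOn (fun q : PM Y => v (zb.1, zb.2) - iXY v (dirac zb.1) q)
        (g.L zb.2) := by
      have h1 : (fun q : PM Y => v (zb.1, zb.2) - iXY v (dirac zb.1) q)
          = fun q => v (zb.1, zb.2) - iPM (fun y' => v (zb.1, y')) q := by
        funext q
        rw [iXY_dirac_left]
        rfl
      rw [h1]
      exact (continuous_const.sub (continuous_iPM _ (by fun_prop))).continuousOn
    obtain ⟨qh, hqhL, hqhmax⟩ := (g.L_cpt zb.2).exists_isMaxOn (g.L_ne zb.2) hcontq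
    have hDeq : Dgap v g.L zb.1 zb.2 = v (zb.1, zb.2) - iXY v (dirac zb.1) qh := by
      apply IsGreatest.csSup_eq
      constructor
      · exact ⟨qh, hqhL, rfl⟩
      · rintro r ⟨q, hq, rfl⟩
        exact hqhmax hq
    obtain ⟨ps, hpsG, hps⟩ := hbal1 zb.1 zb.2
    set e2 : Y → ℝ := fun y' => (∫ z, v (z, y') ∂(ps : MeasureTheory.Measure X)) - v (zb.1, y')
      with he2def
    have he2cont : Continuous e2 := (cont_int_left v hv _).sub (by fun_prop)
    -- Fubini
    have hfub : (∫ y', (∫ z, v (z, y') ∂(ps : MeasureTheory.Measure X))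
        ∂(qh : MeasureTheory.Measure Y)) = iXY v ps qh := by
      rw [iXY]
      refine (MeasureTheory.integral_integral_swap (f := fun z y' => v (z, y')) ?_).symm
      have huncurry : (Function.uncurry fun z y' => v (z, y')) = v := by
        ext ⟨a, b⟩
        rfl
      rw [huncurry]
      exact integrable_cont v hv _
    have hint2 : M ≤ ∫ y', e2 y' ∂(qh : MeasureTheory.Measure Y) := by
      have hi1 : Integrable (fun y' => ∫ z, v (z, y') ∂(ps : MeasureTheory.Measure X))
          (qh : MeasureTheory.Measure Y) := integrable_cont _ (cont_int_left v hv _) _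
      have hi2 : Integrable (fun y' => v (zb.1, y')) (qh : MeasureTheory.Measure Y) :=
        integrable_cont _ (by fun_prop) _
      have h1 : (∫ y', e2 y' ∂(qh : MeasureTheory.Measure Y))
          = iXY v ps qh - iXY v (dirac zb.1) qh := by
        simp only [he2def]
        rw [integral_sub hi1 hi2, hfub, iXY_dirac_left]
      rw [h1]
      have h2 := hps qh hqhL
      have h3 : iXY v (dirac zb.1) qh = v (zb.1, zb.2) - M := by
        rw [← hDeq0]
        linarith [hDeq]
      rw [h3]
      linarith
    have hpt2 : ∀ y' : Y, e2 y' ≤ M := by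
      intro y'
      have h1 : e2 y' ≤ Egap v g.G zb.1 y' := by
        have := le_Egap v Cv hCv g.G (y := y') hpsG
        rw [iXY_dirac_right] at this
        exact this
      have h2 : Ψ (zb.1, y') ≤ S := hzb (zb.1, y')
      simp only [hΨdef] at h2
      have h3 : Egap v g.G zb.1 y' ≤ max (Egap v g.G zb.1 y') (Dgap v g.L zb.1 y') :=
        le_max_left _ _
      simp only [hMdef]
      linarith
    have hexy : ∃ y0 : Y, M ≤ e2 y0 := by
      by_contra hno
      push_neg at hno
      obtain ⟨y0, -, hy0⟩ := isCompact_univ.exists_isMaxOn univ_nonempty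
        he2cont.continuousOn
      have hlt : e2 y0 < M := hno y0
      have hle : (∫ y', e2 y' ∂(qh : MeasureTheory.Measure Y)) ≤ e2 y0 := by
        have := integral_mono (μ := (qh : MeasureTheory.Measure Y))
          (integrable_cont e2 he2cont _)
          (integrable_const (e2 y0)) (fun y' => hy0 (mem_univ y'))
        simpa using this
      linarith
    obtain ⟨y0, hy0⟩ := hexy
    have h1 : e2 y0 ≤ Egap v g.G zb.1 y0 := by
      have := le_Egap v Cv hCv g.G (y := y0) hpsG
      rw [iXY_dirac_right] at this
      exact this
    apply caseE zb.1 y0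
    · rw [← hMdef] at *
      linarith
    · linarith [hM0, hy0, h1]


end GG
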